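/- Equip ℝ^{n+1}, with coordinates (x₀,…,x_n), with the Minkowski bilinear form ⟪x,y⟫ = −x₀y₀ + x₁y₁ + ⋯ + x_n y_n, and let Hⁿ = {x : ⟪x,x⟫ = −1, x₀ > 0}. Let A₁,…,A_{n+2} : ℝ → ℝ^{n+1} be C¹ maps with Aᵢ(t) ∈ Hⁿ for all t, let t₀ ∈ ℝ be such that A₁(t₀),…,A_{n+2}(t₀) are in general position (every n+1 of them linearly independent in ℝ^{n+1}), and let α₁,…,α_{n+2} be nonzero reals with Σᵢ αᵢAᵢ(t₀) = 0. Then Σ_{1≤i<j≤n+2} αᵢα_j · d/dt[⟪Aᵢ(t) − A_j(t), Aᵢ(t) − A_j(t)⟫] evaluated at t = t₀ equals 0. (This is the k = 1 case, proved in the paper within Lemma 4.6, of the hyperbolic volume-balance identity; since ⟪P−Q,P−Q⟫ = 2cosh d(P,Q) − 2 with d the hyperbolic distance, it is equivalent to Σ_{i<j} αᵢα_j sinh(d(Aᵢ(t₀),A_j(t₀))) · d/dt[d(Aᵢ(t),A_j(t))]|_{t₀} = 0.) -/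

import Mathlib

/-- The Minkowski bilinear form on `ℝ^{m+1}` with coordinates `(x₀, …, x_m)`:
`⟪x,y⟫ = −x₀y₀ + x₁y₁ + ⋯ + x_m y_m`. -/
def mink {m : ℕ} (x y : Fin (m + 1) → ℝ) : ℝ :=
  ∑ i, (if i = 0 then -(x i * y i) else x i * y i)

/-- The hyperboloid model of hyperbolic space: `⟪x,x⟫ = −1` and `x₀ > 0`. -/
def InHyperbolic {m : ℕ} (x : Fin (m + 1) → ℝ) : Prop :=
  mink x x = -1 ∧ 0 < x 0

/-- The signature of the Minkowski form. -/
def minkSign {m : ℕ} (k : Fin (m + 1)) : ℝ := if k = 0 then -1 else 1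

lemma mink_eq {m : ℕ} (x y : Fin (m + 1) → ℝ) :
    mink x y = ∑ k, minkSign k * (x k * y k) := by
  unfold mink minkSign
  exact Finset.sum_congr rfl fun k _ => by split_ifs <;> ring

lemma mink_comm {m : ℕ} (x y : Fin (m + 1) → ℝ) : mink x y = mink y x := by
  simp only [mink_eq]
  exact Finset.sum_congr rfl fun k _ => by ring

lemma mink_expand {m : ℕ} (x y : Fin (m + 1) → ℝ) :
    mink (x - y) (x - y) = mink x x - 2 * mink x y + mink y y := by
  simp only [mink_eq, Finset.mul_sum, ← Finset.sum_sub_distrib, ← Finset.sum_add_distrib]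
  exact Finset.sum_congr rfl fun k _ => by simp only [Pi.sub_apply]; ring

lemma mink_sum_right {m : ℕ} {ι : Type*} (s : Finset ι) (x : Fin (m + 1) → ℝ)
    (c : ι → ℝ) (f : ι → Fin (m + 1) → ℝ) :
    mink x (∑ j ∈ s, c j • f j) = ∑ j ∈ s, c j * mink x (f j) := by
  simp only [mink_eq, Finset.sum_apply, Pi.smul_apply, smul_eq_mul, Finset.mul_sum]
  rw [Finset.sum_comm]
  exact Finset.sum_congr rfl fun j _ => Finset.sum_congr rfl fun k _ => by ring

/-- For a `C¹` motion of a degenerate hyperbolic `(n+1)`-simplex on the hyperboloid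
`Hⁿ ⊂ ℝ^{n+1}`, the `α`-weighted sum of the derivatives of the Minkowski squared distances
vanishes (the `k = 1` case of the hyperbolic volume-balance identity). -/
theorem hyperbolic_weighted_sum_deriv_eq_zero {n : ℕ}
    (A : Fin (n + 2) → ℝ → (Fin (n + 1) → ℝ))
    (hA : ∀ i, ContDiff ℝ 1 (A i))
    (hAhyp : ∀ i t, InHyperbolic (A i t))
    (t₀ : ℝ)
    (hgp : ∀ s : Finset (Fin (n + 2)), s.card = n + 1 →
      LinearIndependent ℝ (fun i : ↥s => A i.1 t₀))
    (α : Fin (n + 2) → ℝ) (hα : ∀ i, α i ≠ 0)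
    (hsum : ∑ i, α i • A i t₀ = 0) :
    ∑ i : Fin (n + 2), ∑ j : Fin (n + 2),
      (if i < j then
        α i * α j * deriv (fun t : ℝ => mink (A i t - A j t) (A i t - A j t)) t₀
      else 0) = 0 := by
  classical
  -- component derivatives
  set B : Fin (n + 2) → Fin (n + 1) → ℝ :=
    fun i k => deriv (fun t => A i t k) t₀ with hB
  have hcomp : ∀ i k, HasDerivAt (fun t => A i t k) (B i k) t₀ := by
    intro i k
    have hd : DifferentiableAt ℝ (A i) t₀ :=
      ((hA i).differentiable one_ne_zero).differentiableAt
    exact (differentiableAt_pi.1 hd k).hasDerivAt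
  -- derivative of the Minkowski pairing
  set D : Fin (n + 2) → Fin (n + 2) → ℝ :=
    fun i j => mink (B i) (A j t₀) + mink (A i t₀) (B j) with hD
  have hm : ∀ i j, HasDerivAt (fun t => mink (A i t) (A j t)) (D i j) t₀ := by
    intro i j
    have hterm : ∀ k : Fin (n + 1), HasDerivAt
        (fun t => minkSign k * (A i t k * A j t k))
        (minkSign k * (B i k * A j t₀ k + A i t₀ k * B j k)) t₀ :=
      fun k => ((hcomp i k).mul (hcomp j k)).const_mul (minkSign k)
    have hsum' := HasDerivAt.fun_sum (fun k (_ : k ∈ Finset.univ) => hterm k)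
    have hfun : (fun t => ∑ k : Fin (n + 1), minkSign k * (A i t k * A j t k)) =
        fun t => mink (A i t) (A j t) := by
      funext t; rw [mink_eq]
    have hval : (∑ k : Fin (n + 1), minkSign k * (B i k * A j t₀ k + A i t₀ k * B j k))
        = D i j := by
      rw [hD]; dsimp only
      rw [mink_eq, mink_eq, ← Finset.sum_add_distrib]
      exact Finset.sum_congr rfl fun k _ => by ring
    rw [hfun, hval] at hsum'
    exact hsum'
  -- diagonal vanishes
  have hdiag : ∀ i, D i i = 0 := by
    intro i
    have h1 : (fun t => mink (A i t) (A i t)) = fun _ : ℝ => (-1 : ℝ) := by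
      funext t; exact (hAhyp i t).1
    have h2 := (hm i i).deriv
    rw [h1, deriv_const] at h2
    exact h2.symm
  -- symmetry
  have hsymm : ∀ i j, D i j = D j i := by
    intro i j
    rw [hD]; dsimp only
    rw [mink_comm (B i), mink_comm (A i t₀), add_comm]
  -- the derivative in the statement
  have hder : ∀ i j : Fin (n + 2),
      deriv (fun t : ℝ => mink (A i t - A j t) (A i t - A j t)) t₀ = -2 * D i j := by
    intro i j
    have h1 : (fun t : ℝ => mink (A i t - A j t) (A i t - A j t)) =
        fun t => -2 + (-2) * mink (A i t) (A j t) := by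
      funext t
      rw [mink_expand, (hAhyp i t).1, (hAhyp j t).1]
      ring
    rw [h1]
    exact (((hm i j).const_mul (-2 : ℝ)).const_add (-2 : ℝ)).deriv
  -- full weighted sum vanishes
  have hT : ∑ i : Fin (n + 2), ∑ j : Fin (n + 2), α i * α j * D i j = 0 := by
    have hsplit : ∀ i j, α i * α j * D i j =
        α i * (α j * mink (B i) (A j t₀)) + α j * (α i * mink (B j) (A i t₀)) := by
      intro i j
      rw [hD]; dsimp only
      rw [mink_comm (A i t₀)]
      ring
    rw [Finset.sum_congr rfl fun i _ => Finset.sum_congr rfl fun j _ => hsplit i j]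
    have hz : ∀ i : Fin (n + 2), mink (B i) (∑ j, α j • A j t₀) = 0 := by
      intro i; rw [hsum]
      simp [mink_eq]
    have h1 : ∑ i : Fin (n + 2), ∑ j : Fin (n + 2),
        α i * (α j * mink (B i) (A j t₀)) = 0 := by
      refine Finset.sum_eq_zero fun i _ => ?_
      rw [← Finset.mul_sum, ← mink_sum_right, hz i, mul_zero]
    have h2 : ∑ i : Fin (n + 2), ∑ j : Fin (n + 2),
        α j * (α i * mink (B j) (A i t₀)) = 0 := by
      rw [Finset.sum_comm]
      refine Finset.sum_eq_zero fun j _ => ?_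
      rw [← Finset.mul_sum, ← mink_sum_right, hz j, mul_zero]
    rw [Finset.sum_congr rfl fun i _ => Finset.sum_add_distrib,
      Finset.sum_add_distrib, h1, h2, add_zero]
  -- split the full sum into i<j, j<i, i=j parts
  set S : ℝ := ∑ i : Fin (n + 2), ∑ j : Fin (n + 2),
      (if i < j then α i * α j * D i j else 0) with hS
  have hTsplit : ∑ i : Fin (n + 2), ∑ j : Fin (n + 2), α i * α j * D i j = S + S := by
    have hcase : ∀ i j : Fin (n + 2), α i * α j * D i j =
        (if i < j then α i * α j * D i j else 0) +
        (if j < i then α i * α j * D i j else 0) +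
        (if i = j then α i * α j * D i j else 0) := by
      intro i j
      rcases lt_trichotomy i j with h | h | h
      · simp [h, h.ne, (not_lt.2 h.le : ¬ j < i)]
      · simp [h, lt_irrefl]
      · simp [h, h.ne', (not_lt.2 h.le : ¬ i < j)]
    rw [Finset.sum_congr rfl fun i _ => Finset.sum_congr rfl fun j _ => hcase i j]
    rw [Finset.sum_congr rfl fun i (_ : i ∈ Finset.univ) =>
        (Finset.sum_add_distrib (s := Finset.univ)),
      Finset.sum_add_distrib,
      Finset.sum_congr rfl fun i (_ : i ∈ Finset.univ) =>
        (Finset.sum_add_distrib (s := Finset.univ)),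
      Finset.sum_add_distrib]
    have hdz : ∑ i : Fin (n + 2), ∑ j : Fin (n + 2),
        (if i = j then α i * α j * D i j else 0) = 0 := by
      refine Finset.sum_eq_zero fun i _ => ?_
      rw [Finset.sum_ite_eq Finset.univ i (fun j => α i * α j * D i j)]
      simp [hdiag i]
    have hswap : ∑ i : Fin (n + 2), ∑ j : Fin (n + 2),
        (if j < i then α i * α j * D i j else 0) = S := by
      rw [hS, Finset.sum_comm]
      refine Finset.sum_congr rfl fun j _ => Finset.sum_congr rfl fun i _ => ?_
      by_cases h : j < i <;> simp [h, hsymm i j, mul_comm (α i) (α j)]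
    rw [hdz, hswap, add_zero, hS]
  have hS0 : S = 0 := by
    have h := hT
    rw [hTsplit] at h
    linarith
  calc ∑ i : Fin (n + 2), ∑ j : Fin (n + 2),
      (if i < j then
        α i * α j * deriv (fun t : ℝ => mink (A i t - A j t) (A i t - A j t)) t₀
      else 0)
      = ∑ i : Fin (n + 2), ∑ j : Fin (n + 2),
        (if i < j then (-2) * (α i * α j * D i j) else 0) := by
        refine Finset.sum_congr rfl fun i _ => Finset.sum_congr rfl fun j _ => ?_
        by_cases h : i < j
        · simp only [h, if_true, hder i j]; ring
        · simp [h]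
    _ = (-2) * S := by
        rw [hS, Finset.mul_sum]
        refine Finset.sum_congr rfl fun i _ => ?_
        rw [Finset.mul_sum]
        refine Finset.sum_congr rfl fun j _ => ?_
        by_cases h : i < j <;> simp [h]
    _ = 0 := by rw [hS0, mul_zero]
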